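/- Let x ∈ 𝔷₄ satisfy x₁₃ = x₃₁ (entries at positions (1,3) and (3,1)). Let g, h ∈ S₄,₂ and suppose that g·x·h^τ ∈ 𝔷₄. Then the (1,3) entry of g·x·h^τ equals its (3,1) entry. -/
import Mathlib


open Matrix

/-- Assembles a `3 × 3` grid of `2 × 2` blocks into a `6 × 6` matrix. -/
def asm {𝕂 : Type*} [RCLike 𝕂] (m : Matrix (Fin 3) (Fin 3) (Matrix (Fin 2) (Fin 2) 𝕂)) :
    Matrix (Fin 6) (Fin 6) 𝕂 :=
  Matrix.of fun i j =>
    m ⟨(i : ℕ) / 2, by have := i.2; omega⟩ ⟨(j : ℕ) / 2, by have := j.2; omega⟩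
      ⟨(i : ℕ) % 2, by omega⟩ ⟨(j : ℕ) % 2, by omega⟩

/-- The subgroup `S₄,₂ ⊆ GL₆(𝕂)` of matrices of the block form `[[a,b,0],[0,a,0],[0,0,a]]`
with `a ∈ GL₂(𝕂)` and `b ∈ gl₂(𝕂)`. -/
def S42 (𝕂 : Type*) [RCLike 𝕂] : Set (Matrix (Fin 6) (Fin 6) 𝕂) :=
  {s | ∃ a b : Matrix (Fin 2) (Fin 2) 𝕂, IsUnit a.det ∧
    s = asm !![a, b, 0; 0, a, 0; 0, 0, a]}

/-- The set `𝔷₄` of invertible `6 × 6` matrices whose only possibly nonzero entries are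
those in the upper left `3 × 3` corner except the `(3,3)` one, together with the
entries at (1-indexed) positions `(4,4)`, `(5,6)`, `(6,5)`, which are equal to `1`. -/
def z4set (𝕂 : Type*) [RCLike 𝕂] : Set (Matrix (Fin 6) (Fin 6) 𝕂) :=
  {x | IsUnit x.det ∧ x 2 2 = 0 ∧ x 3 3 = 1 ∧ x 4 5 = 1 ∧ x 5 4 = 1 ∧
    ∀ i j : Fin 6, x i j ≠ 0 →
      ((i : ℕ) < 3 ∧ (j : ℕ) < 3) ∨ (i = 3 ∧ j = 3) ∨ (i = 4 ∧ j = 5) ∨ (i = 5 ∧ j = 4)}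

theorem cv5 {α : Type*} (y : α) (u : Fin 5 → α) : Matrix.vecCons y u 5 = u 4 := rfl
theorem cv4 {α : Type*} (y : α) (u : Fin 4 → α) : Matrix.vecCons y u 4 = u 3 := rfl
theorem cv3 {α : Type*} (y : α) (u : Fin 3 → α) : Matrix.vecCons y u 3 = u 2 := rfl
theorem cv2 {α : Type*} (y : α) (u : Fin 2 → α) : Matrix.vecCons y u 2 = u 1 := rfl
theorem cv1 {α : Type*} (y : α) (u : Fin 1 → α) : Matrix.vecCons y u 1 = u 0 := rfl
theorem cv0 {α : Type*} (y : α) (u : Fin 0 → α) : Matrix.vecCons y u 0 = y := rfl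

theorem asm_lit {𝕂 : Type*} [RCLike 𝕂] (a b : Matrix (Fin 2) (Fin 2) 𝕂) :
    asm !![a,b,0;0,a,0;0,0,a] =
      !![a 0 0, a 0 1, b 0 0, b 0 1, 0, 0;
         a 1 0, a 1 1, b 1 0, b 1 1, 0, 0;
         0, 0, a 0 0, a 0 1, 0, 0;
         0, 0, a 1 0, a 1 1, 0, 0;
         0, 0, 0, 0, a 0 0, a 0 1;
         0, 0, 0, 0, a 1 0, a 1 1] := by
  ext i j
  fin_cases i <;> fin_cases j <;> rfl

/-- If `x ∈ 𝔷₄` has its `(1,3)` entry equal to its `(3,1)` entry (1-indexed), and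
`g, h ∈ S₄,₂` are such that `g·x·h^τ ∈ 𝔷₄`, then the `(1,3)` entry of `g·x·h^τ`
equals its `(3,1)` entry. -/
theorem z4_relative_stability {𝕂 : Type*} [RCLike 𝕂]
    (x : Matrix (Fin 6) (Fin 6) 𝕂) (hx : x ∈ z4set 𝕂) (hsym : x 0 2 = x 2 0)
    (g h : Matrix (Fin 6) (Fin 6) 𝕂) (hg : g ∈ S42 𝕂) (hh : h ∈ S42 𝕂)
    (hmem : g * x * hᵀ ∈ z4set 𝕂) :
    (g * x * hᵀ) 0 2 = (g * x * hᵀ) 2 0 := by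
  obtain ⟨a, b, -, rfl⟩ := hg
  obtain ⟨c, d, -, rfl⟩ := hh
  obtain ⟨-, z8, hx33, hx45, hx54, hsupp⟩ := hx
  obtain ⟨-, -, hy33, hy45, -, hysupp⟩ := hmem
  rw [asm_lit a b, asm_lit c d] at *
  -- zero entries of x
  have z1 : x 0 3 = 0 := by by_contra hne; exact absurd (hsupp 0 3 hne) (by decide)
  have z2 : x 1 3 = 0 := by by_contra hne; exact absurd (hsupp 1 3 hne) (by decide)
  have z3 : x 2 3 = 0 := by by_contra hne; exact absurd (hsupp 2 3 hne) (by decide)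
  have z4 : x 3 2 = 0 := by by_contra hne; exact absurd (hsupp 3 2 hne) (by decide)
  have z5 : x 3 0 = 0 := by by_contra hne; exact absurd (hsupp 3 0 hne) (by decide)
  have z6 : x 3 1 = 0 := by by_contra hne; exact absurd (hsupp 3 1 hne) (by decide)
  have z7 : x 4 4 = 0 := by by_contra hne; exact absurd (hsupp 4 4 hne) (by decide)

  have z9 : x 4 0 = 0 := by by_contra hne; exact absurd (hsupp 4 0 hne) (by decide)
  have z10 : x 4 1 = 0 := by by_contra hne; exact absurd (hsupp 4 1 hne) (by decide)
  have z11 : x 4 2 = 0 := by by_contra hne; exact absurd (hsupp 4 2 hne) (by decide)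
  have z12 : x 4 3 = 0 := by by_contra hne; exact absurd (hsupp 4 3 hne) (by decide)
  have z13 : x 5 0 = 0 := by by_contra hne; exact absurd (hsupp 5 0 hne) (by decide)
  have z14 : x 5 1 = 0 := by by_contra hne; exact absurd (hsupp 5 1 hne) (by decide)
  have z15 : x 5 2 = 0 := by by_contra hne; exact absurd (hsupp 5 2 hne) (by decide)
  have z16 : x 5 3 = 0 := by by_contra hne; exact absurd (hsupp 5 3 hne) (by decide)
  have z17 : x 5 5 = 0 := by by_contra hne; exact absurd (hsupp 5 5 hne) (by decide)
  have z18 : x 0 4 = 0 := by by_contra hne; exact absurd (hsupp 0 4 hne) (by decide)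
  have z19 : x 0 5 = 0 := by by_contra hne; exact absurd (hsupp 0 5 hne) (by decide)
  have z20 : x 1 4 = 0 := by by_contra hne; exact absurd (hsupp 1 4 hne) (by decide)
  have z21 : x 1 5 = 0 := by by_contra hne; exact absurd (hsupp 1 5 hne) (by decide)
  have z22 : x 2 4 = 0 := by by_contra hne; exact absurd (hsupp 2 4 hne) (by decide)
  have z23 : x 2 5 = 0 := by by_contra hne; exact absurd (hsupp 2 5 hne) (by decide)
  have z24 : x 3 4 = 0 := by by_contra hne; exact absurd (hsupp 3 4 hne) (by decide)
  have z25 : x 3 5 = 0 := by by_contra hne; exact absurd (hsupp 3 5 hne) (by decide)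
  set G := !![a 0 0, a 0 1, b 0 0, b 0 1, (0:𝕂), 0;
         a 1 0, a 1 1, b 1 0, b 1 1, 0, 0;
         0, 0, a 0 0, a 0 1, 0, 0;
         0, 0, a 1 0, a 1 1, 0, 0;
         0, 0, 0, 0, a 0 0, a 0 1;
         0, 0, 0, 0, a 1 0, a 1 1] with hG
  set H := !![c 0 0, c 0 1, d 0 0, d 0 1, (0:𝕂), 0;
         c 1 0, c 1 1, d 1 0, d 1 1, 0, 0;
         0, 0, c 0 0, c 0 1, 0, 0;
         0, 0, c 1 0, c 1 1, 0, 0;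
         0, 0, 0, 0, c 0 0, c 0 1;
         0, 0, 0, 0, c 1 0, c 1 1] with hH
  have hy23 : (G * x * Hᵀ) 2 3 = 0 := by
    by_contra hne; exact absurd (hysupp 2 3 hne) (by decide)
  have hy44 : (G * x * Hᵀ) 4 4 = 0 := by
    by_contra hne; exact absurd (hysupp 4 4 hne) (by decide)
  simp only [Matrix.mul_apply, Matrix.transpose_apply, Fin.sum_univ_six, hG, hH,
    Matrix.cons_val', Matrix.cons_val_zero, Matrix.cons_val_one, Matrix.head_cons,
    Matrix.empty_val', Matrix.cons_val_fin_one, Matrix.head_fin_const,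
    Matrix.cons_val_two, Matrix.tail_cons, Matrix.cons_val_three,
    Matrix.cons_val_four, Matrix.cons_val_succ, Matrix.of_apply, cv5, cv4, cv3, cv2, cv1, cv0,
    z1,z2,z3,z4,z5,z6,z7,z8,z9,z10,z11,z12,z13,z14,z15,z16,z17,z18,z19,z20,z21,z22,z23,z24,z25,
    hx33, hx45, hx54, mul_zero, zero_mul, mul_one, one_mul, add_zero, zero_add]
    at hy23 hy44 hy33 hy45 ⊢
  have ha01 : a 0 1 = 0 := by linear_combination a 1 1 * hy23 - a 0 1 * hy33
  have hc01 : c 0 1 = 0 := by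
    linear_combination c 1 1 * hy44 - c 0 1 * hy45 + (c 0 1 * c 1 0 - c 1 1 * c 0 0) * ha01
  linear_combination (a 0 0 * c 0 0) * hsym + (x 1 2 * c 0 0 - d 0 1) * ha01 +
    (b 0 1 - a 0 0 * x 2 1) * hc01
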